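/- Let n ≥ 1 be an integer, let b, c be integers, and let k be any integer. Then k · C(n, k)_{b,c} = n · (C(n-1, k-1)_{b,c} - c · C(n-1, k+1)_{b,c}). -/

import Mathlib

open Polynomial in
/-- The generalized trinomial coefficient `C(n,k)_{b,c}`: the coefficient of `x^(n+k)`
in `(x² + b·x + c)^n`; it vanishes when `n + k < 0` (in particular when `|k| > n`). -/
noncomputable def gtc (b c : ℤ) (n : ℕ) (k : ℤ) : ℤ :=
  if 0 ≤ (n : ℤ) + k then ((X ^ 2 + C b * X + C c) ^ n).coeff ((n : ℤ) + k).toNat else 0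

open Polynomial

lemma poly_key (b c : ℤ) (n : ℕ) (hn : 1 ≤ n) :
    X * derivative ((X^2 + C b * X + C c)^n)
      = C (n : ℤ) * ((X^2 + C b * X + C c)^n + (X^2 + C b * X + C c)^(n-1) * (X^2 - C c)) := by
  obtain ⟨m, rfl⟩ : ∃ m, n = m + 1 := ⟨n - 1, by omega⟩
  rw [derivative_pow]
  simp [pow_succ]
  ring

lemma coeff_key (b c : ℤ) (n : ℕ) (hn : 1 ≤ n) (m : ℕ) :
    (m : ℤ) * ((X^2 + C b * X + C c)^n).coeff m
      = (n : ℤ) * (((X^2 + C b * X + C c)^n).coeff m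
          + ((if 2 ≤ m then ((X^2 + C b * X + C c)^(n-1)).coeff (m-2) else 0)
            - c * ((X^2 + C b * X + C c)^(n-1)).coeff m)) := by
  have h := congrArg (fun q => q.coeff m) (poly_key b c n hn)
  simp only [coeff_C_mul, coeff_add, mul_sub, coeff_sub, coeff_mul_C, coeff_mul_X_pow'] at h
  rcases m with _ | m
  · simp only [mul_coeff_zero, coeff_X_zero, zero_mul, Nat.cast_zero] at h ⊢
    simp only [show ¬ (2 ≤ 0) from by omega, if_false] at h ⊢
    linarith [h]
  · rw [coeff_X_mul, coeff_derivative] at h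
    push_cast at h ⊢
    linarith [h]

theorem stmt6 (n : ℕ) (hn : 1 ≤ n) (b c : ℤ) (k : ℤ) :
    k * gtc b c n k = (n : ℤ) * (gtc b c (n - 1) (k - 1) - c * gtc b c (n - 1) (k + 1)) := by
  by_cases h : 0 ≤ (n : ℤ) + k
  · set m : ℕ := ((n : ℤ) + k).toNat with hm
    have hkm : (k : ℤ) = (m : ℤ) - n := by omega
    have e1 : gtc b c n k = ((X^2 + C b * X + C c)^n).coeff m := by
      simp only [gtc, if_pos h]
      rfl
    have e2 : gtc b c (n-1) (k+1) = ((X^2 + C b * X + C c)^(n-1)).coeff m := by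
      simp only [gtc]
      rw [if_pos (by omega)]
      congr 1
      omega
    have e3 : gtc b c (n-1) (k-1)
        = if 2 ≤ m then ((X^2 + C b * X + C c)^(n-1)).coeff (m-2) else 0 := by
      by_cases h2 : 2 ≤ m
      · rw [if_pos h2]
        simp only [gtc]
        rw [if_pos (by omega)]
        congr 1
        omega
      · rw [if_neg h2]
        simp only [gtc]
        rw [if_neg (by omega)]
    rw [e1, e2, e3]
    have hk := coeff_key b c n hn m
    linear_combination hk + ((X^2 + C b * X + C c)^n).coeff m * hkm
  · have e1 : gtc b c n k = 0 := by simp only [gtc]; rw [if_neg h]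
    have e2 : gtc b c (n-1) (k+1) = 0 := by simp only [gtc]; rw [if_neg (by omega)]
    have e3 : gtc b c (n-1) (k-1) = 0 := by simp only [gtc]; rw [if_neg (by omega)]
    rw [e1, e2, e3]
    ring
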